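/- Under hypotheses H(A), H(B), H(J), H(f), H(u₀) and (H_s), Problem P_hvi has a unique solution v ∈ C([0,T];V), i.e., there exists exactly one continuous function v: [0,T] → V such that for all t ∈ [0,T] and all w ∈ V: ⟨A v(t) + B(Kv)(t), w⟩ + J₂⁰(γ(Kv)(t), γ v(t); γ w) ≥ ⟨f(t), w⟩. -/

import Mathlib

set_option linter.unusedSectionVars false
set_option linter.unusedVariables false

open Filter MeasureTheory Set

noncomputable def clarkeDeriv {Y : Type*} [NormedAddCommGroup Y] [NormedSpace ℝ Y]
    (φ : Y → ℝ) (y z : Y) : ℝ :=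
  Filter.limsup (fun p : Y × ℝ => (φ (p.1 + p.2 • z) - φ p.1) / p.2)
    ((nhds y) ×ˢ (nhdsWithin 0 (Set.Ioi 0)))

def clarkeSubdiff {Y : Type*} [NormedAddCommGroup Y] [NormedSpace ℝ Y]
    (φ : Y → ℝ) (y : Y) : Set (Y →L[ℝ] ℝ) :=
  {ξ | ∀ z, ξ z ≤ clarkeDeriv φ y z}

section Toolkit
variable {Y Y' : Type*} [NormedAddCommGroup Y] [NormedSpace ℝ Y]
  [NormedAddCommGroup Y'] [NormedSpace ℝ Y']

/-- the filter used in the Clarke derivative -/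
noncomputable def Fq (y : Y) : Filter (Y × ℝ) := (nhds y) ×ˢ (nhdsWithin 0 (Set.Ioi 0))

/-- the difference quotient -/
noncomputable def cq (φ : Y → ℝ) (z : Y) (p : Y × ℝ) : ℝ := (φ (p.1 + p.2 • z) - φ p.1) / p.2

lemma clarkeDeriv_eq (φ : Y → ℝ) (y z : Y) :
    clarkeDeriv φ y z = Filter.limsup (cq φ z) (Fq y) := rfl

instance Fq_neBot (y : Y) : (Fq y).NeBot := by
  unfold Fq; infer_instance

/-- quotient-bounded predicate -/
def QB (φ : Y → ℝ) (z y : Y) : Prop := ∃ M : ℝ, ∀ᶠ p in Fq y, |cq φ z p| ≤ M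

lemma QB.bddAbove {φ : Y → ℝ} {z y : Y} (h : QB φ z y) :
    IsBoundedUnder (· ≤ ·) (Fq y) (cq φ z) := by
  obtain ⟨M, hM⟩ := h
  exact ⟨M, hM.mono fun p hp => (abs_le.mp hp).2⟩

lemma QB.cobdd {φ : Y → ℝ} {z y : Y} (h : QB φ z y) :
    IsCoboundedUnder (· ≤ ·) (Fq y) (cq φ z) := by
  obtain ⟨M, hM⟩ := h
  exact isCoboundedUnder_le_of_eventually_le (Fq y) (x := -M)
    (hM.mono fun p hp => (abs_le.mp hp).1)

lemma clarke_le_of_ev {φ : Y → ℝ} {z y : Y} {c : ℝ} (h : ∀ᶠ p in Fq y, cq φ z p ≤ c)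
    (hq : QB φ z y) : clarkeDeriv φ y z ≤ c :=
  limsup_le_of_le hq.cobdd h

lemma ev_cq_lt {φ : Y → ℝ} {z y : Y} {c : ℝ} (h : clarkeDeriv φ y z < c) (hq : QB φ z y) :
    ∀ᶠ p in Fq y, cq φ z p < c :=
  eventually_lt_of_limsup_lt h hq.bddAbove

lemma le_clarke_of_frequently {φ : Y → ℝ} {z y : Y} {c : ℝ}
    (h : ∃ᶠ p in Fq y, c ≤ cq φ z p) (hq : QB φ z y) : c ≤ clarkeDeriv φ y z :=
  le_limsup_of_frequently_le h hq.bddAbove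

/-- transfer lemma along a filter map -/
lemma clarke_trans {φ : Y → ℝ} {z y : Y} {φ' : Y' → ℝ} {z' y' : Y'}
    (m : Y × ℝ → Y' × ℝ) (hm : Tendsto m (Fq y) (Fq y'))
    (heq : ∀ p, cq φ z p = cq φ' z' (m p))
    (hq : QB φ z y) (hq' : QB φ' z' y') :
    clarkeDeriv φ y z ≤ clarkeDeriv φ' y' z' := by
  rw [clarkeDeriv_eq, clarkeDeriv_eq]
  have h1 : limsup (cq φ z) (Fq y) = limsup (cq φ' z') (map m (Fq y)) := by
    rw [limsup_congr (Eventually.of_forall heq)]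
    simp only [Filter.limsup, Filter.map_map]; rfl
  rw [h1]
  refine limsup_le_limsup_of_le hm ?_ hq'.bddAbove
  · obtain ⟨M, hM⟩ := hq
    refine isCoboundedUnder_le_of_eventually_le _ (x := -M) ?_
    rw [eventually_map]
    exact (hM.mono fun p hp => (abs_le.mp hp).1).mono fun p hp => heq p ▸ hp

lemma QB.trans {φ : Y → ℝ} {z y : Y} {φ' : Y' → ℝ} {z' y' : Y'}
    (m : Y × ℝ → Y' × ℝ) (hm : Tendsto m (Fq y) (Fq y'))
    (heq : ∀ p, cq φ z p = cq φ' z' (m p)) (hq' : QB φ' z' y') : QB φ z y := by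
  obtain ⟨M, hM⟩ := hq'
  exact ⟨M, (hm.eventually hM).mono fun p hp => by rw [heq]; exact hp⟩

/-- eventual two-sided bound from a local Lipschitz bound -/
lemma ev_abs_cq_le {φ : Y → ℝ} {y : Y} {K r : ℝ} (hr : 0 < r)
    (hK : ∀ a ∈ Metric.ball y r, ∀ b ∈ Metric.ball y r, |φ a - φ b| ≤ K * ‖a - b‖) (z : Y) :
    ∀ᶠ p in Fq y, |cq φ z p| ≤ K * ‖z‖ := by
  have hδ : (0:ℝ) < r / (2 * (‖z‖ + 1)) := by positivity
  have hmem : (Metric.ball y (r/2)) ×ˢ (Ioo (0:ℝ) (r / (2 * (‖z‖ + 1)))) ∈ Fq y := by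
    refine prod_mem_prod (Metric.ball_mem_nhds y (by positivity)) ?_
    exact Ioo_mem_nhdsGT_of_mem ⟨le_rfl, hδ⟩
  filter_upwards [hmem] with p hp
  obtain ⟨hp1, hp2⟩ := hp
  have hlam : 0 < p.2 := hp2.1
  have h1 : p.1 + p.2 • z ∈ Metric.ball y r := by
    have : ‖p.1 + p.2 • z - y‖ ≤ ‖p.1 - y‖ + p.2 * ‖z‖ := by
      calc ‖p.1 + p.2 • z - y‖ = ‖(p.1 - y) + p.2 • z‖ := by rw [add_comm (p.1 - y), ← add_sub_assoc, add_comm]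
        _ ≤ ‖p.1 - y‖ + ‖p.2 • z‖ := norm_add_le _ _
        _ = ‖p.1 - y‖ + |p.2| * ‖z‖ := by rw [norm_smul, Real.norm_eq_abs]
        _ = ‖p.1 - y‖ + p.2 * ‖z‖ := by rw [abs_of_pos hlam]
    have h2 : p.2 * ‖z‖ ≤ r / 2 := by
      have := hp2.2.le
      have hz1 : p.2 * ‖z‖ ≤ (r / (2 * (‖z‖ + 1))) * (‖z‖+1) := by
        have : p.2 * ‖z‖ ≤ p.2 * (‖z‖+1) := by nlinarith [norm_nonneg z]
        refine this.trans (by nlinarith [norm_nonneg z])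
      calc p.2 * ‖z‖ ≤ (r / (2 * (‖z‖ + 1))) * (‖z‖+1) := hz1
        _ = r / 2 := by field_simp
    have hball : ‖p.1 - y‖ < r / 2 := by
      have := Metric.mem_ball.mp hp1; rwa [dist_eq_norm] at this
    rw [Metric.mem_ball, dist_eq_norm]
    linarith
  have h1' : p.1 ∈ Metric.ball y r := by
    refine Metric.ball_subset_ball (by linarith) hp1
  have := hK _ h1 _ h1'
  have heq : p.1 + p.2 • z - p.1 = p.2 • z := by abel
  rw [heq, norm_smul, Real.norm_eq_abs, abs_of_pos hlam] at this
  unfold cq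
  rw [abs_div, abs_of_pos hlam, div_le_iff₀ hlam]
  calc |φ (p.1 + p.2 • z) - φ p.1| ≤ K * (p.2 * ‖z‖) := this
    _ = K * ‖z‖ * p.2 := by ring

lemma LocallyLipschitz.exists_ball {φ : Y → ℝ} (h : LocallyLipschitz φ) (y : Y) :
    ∃ K r : ℝ, 0 < r ∧ 0 ≤ K ∧
      ∀ a ∈ Metric.ball y r, ∀ b ∈ Metric.ball y r, |φ a - φ b| ≤ K * ‖a - b‖ := by
  obtain ⟨K, t, ht, hK⟩ := h y
  obtain ⟨r, hr, hball⟩ := Metric.mem_nhds_iff.mp ht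
  refine ⟨K, r, hr, K.2, fun a ha b hb => ?_⟩
  have := hK.dist_le_mul a (hball ha) b (hball hb)
  rwa [Real.dist_eq, dist_eq_norm] at this

lemma QB.of_locallyLipschitz {φ : Y → ℝ} (h : LocallyLipschitz φ) (y z : Y) : QB φ z y := by
  obtain ⟨K, r, hr, _, hK⟩ := h.exists_ball y
  exact ⟨K * ‖z‖, ev_abs_cq_le hr hK z⟩

lemma clarke_le_lip {φ : Y → ℝ} {y : Y} {K r : ℝ} (hr : 0 < r)
    (hK : ∀ a ∈ Metric.ball y r, ∀ b ∈ Metric.ball y r, |φ a - φ b| ≤ K * ‖a - b‖) (z : Y) :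
    clarkeDeriv φ y z ≤ K * ‖z‖ :=
  clarke_le_of_ev ((ev_abs_cq_le hr hK z).mono fun p hp => (abs_le.mp hp).2)
    ⟨K * ‖z‖, ev_abs_cq_le hr hK z⟩

lemma neg_lip_le_clarke {φ : Y → ℝ} {y : Y} {K r : ℝ} (hr : 0 < r)
    (hK : ∀ a ∈ Metric.ball y r, ∀ b ∈ Metric.ball y r, |φ a - φ b| ≤ K * ‖a - b‖) (z : Y) :
    -(K * ‖z‖) ≤ clarkeDeriv φ y z :=
  le_clarke_of_frequently
    (((ev_abs_cq_le hr hK z).mono fun p hp => (abs_le.mp hp).1).frequently)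
    ⟨K * ‖z‖, ev_abs_cq_le hr hK z⟩

end Toolkit

section Toolkit2
variable {Y : Type*} [NormedAddCommGroup Y] [NormedSpace ℝ Y]

lemma ev_pos (y : Y) : ∀ᶠ p in (Fq y : Filter (Y × ℝ)), 0 < p.2 := by
  have hmem : (univ : Set Y) ×ˢ (Ioi (0:ℝ)) ∈ Fq y :=
    prod_mem_prod univ_mem self_mem_nhdsWithin
  filter_upwards [hmem] with p hp
  exact hp.2

lemma tendsto_cq_of_eq {a : Y → ℝ} {z y : Y} {G : Y × ℝ → ℝ} (hG : Continuous G)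
    (he : ∀ p : Y × ℝ, 0 < p.2 → cq a z p = G p) :
    Tendsto (cq a z) (Fq y) (nhds (G (y, 0))) := by
  have hle : (Fq y : Filter (Y × ℝ)) ≤ nhds (y, 0) := by
    rw [nhds_prod_eq]
    exact Filter.prod_mono le_rfl nhdsWithin_le_nhds
  have h1 : Tendsto G (Fq y) (nhds (G (y, 0))) := (hG.tendsto (y, 0)).comp hle
  refine Tendsto.congr' ?_ h1
  filter_upwards [ev_pos y] with p hp
  exact (he p hp).symm

lemma QB.of_tendsto {a : Y → ℝ} {z y : Y} {L : ℝ} (hA : Tendsto (cq a z) (Fq y) (nhds L)) :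
    QB a z y := by
  refine ⟨|L| + 1, ?_⟩
  filter_upwards [hA (Metric.ball_mem_nhds L one_pos)] with p hp
  have : |cq a z p - L| < 1 := by
    have := Metric.mem_ball.mp hp
    rwa [Real.dist_eq] at this
  calc |cq a z p| ≤ |cq a z p - L| + |L| := by
        have := abs_add_le (cq a z p - L) L; simpa using this
    _ ≤ |L| + 1 := by linarith

lemma cq_add (a b : Y → ℝ) (z : Y) (p : Y × ℝ) :
    cq (fun v => a v + b v) z p = cq a z p + cq b z p := by
  unfold cq; ring

lemma QB.add {a b : Y → ℝ} {z y : Y} (ha : QB a z y) (hb : QB b z y) :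
    QB (fun v => a v + b v) z y := by
  obtain ⟨M, hM⟩ := ha; obtain ⟨N, hN⟩ := hb
  refine ⟨M + N, ?_⟩
  filter_upwards [hM, hN] with p h1 h2
  rw [cq_add]
  exact (abs_add_le _ _).trans (add_le_add h1 h2)

lemma clarke_add_le_of_tendsto {a b : Y → ℝ} {z y : Y} {L : ℝ}
    (hA : Tendsto (cq a z) (Fq y) (nhds L)) (hb : QB b z y) :
    clarkeDeriv (fun v => a v + b v) y z ≤ L + clarkeDeriv b y z := by
  have hqa : QB a z y := QB.of_tendsto hA
  refine le_of_forall_pos_le_add fun ε hε => ?_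
  have hε2 : 0 < ε / 2 := by linarith
  have ev1 : ∀ᶠ p in Fq y, cq a z p < L + ε / 2 :=
    hA (Iio_mem_nhds (by linarith : L < L + ε/2))
  have ev2 : ∀ᶠ p in Fq y, cq b z p < clarkeDeriv b y z + ε / 2 :=
    ev_cq_lt (by linarith) hb
  have : clarkeDeriv (fun v => a v + b v) y z ≤ L + clarkeDeriv b y z + ε := by
    refine clarke_le_of_ev ?_ (hqa.add hb)
    filter_upwards [ev1, ev2] with p h1 h2
    rw [cq_add]; linarith
  linarith

lemma clarke_smul_le {φ : Y → ℝ} {y z : Y} {c : ℝ} (hc : 0 < c)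
    (hq : QB φ z y) (hq' : QB φ (c • z) y) :
    c * clarkeDeriv φ y z ≤ clarkeDeriv φ y (c • z) := by
  set L := clarkeDeriv φ y (c • z) with hL
  have key : ∀ p : Y × ℝ, cq φ (c • z) (p.1, p.2 / c) = c * cq φ z p := by
    rintro ⟨u, μ⟩
    unfold cq
    rcases eq_or_ne μ 0 with h | h
    · simp [h]
    · have hμc : μ / c ≠ 0 := div_ne_zero h hc.ne'
      have : (μ / c) • (c • z) = μ • z := by
        rw [smul_smul, div_mul_cancel₀ _ hc.ne']
      simp only [this]
      field_simp
  have hdiv : Tendsto (fun μ : ℝ => μ / c) (nhdsWithin 0 (Ioi 0)) (nhdsWithin 0 (Ioi 0)) := by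
    refine tendsto_nhdsWithin_of_tendsto_nhds_of_eventually_within _ ?_ ?_
    · have : Tendsto (fun μ : ℝ => μ / c) (nhds 0) (nhds (0 / c)) :=
        (tendsto_id.div_const c)
      simpa using this.mono_left nhdsWithin_le_nhds
    · filter_upwards [self_mem_nhdsWithin] with μ hμ
      exact div_pos hμ hc
  have hm : Tendsto (fun p : Y × ℝ => (p.1, p.2 / c)) (Fq y) (Fq y) := by
    unfold Fq
    exact tendsto_fst.prodMk (hdiv.comp tendsto_snd)
  have main : clarkeDeriv φ y z ≤ L / c := by
    refine le_of_forall_pos_le_add fun ε hε => ?_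
    have ev : ∀ᶠ p in Fq y, cq φ (c • z) p < L + c * ε :=
      ev_cq_lt (by nlinarith) hq'
    refine clarke_le_of_ev ?_ hq
    filter_upwards [hm.eventually ev] with p hp
    rw [key p] at hp
    have : cq φ z p < (L + c * ε) / c := by
      rw [lt_div_iff₀ hc]; linarith [hp]
    refine this.le.trans (le_of_eq ?_)
    field_simp
  calc c * clarkeDeriv φ y z ≤ c * (L / c) := by nlinarith
    _ = L := by field_simp

lemma zero_le_clarke_of_min {ψ : Y → ℝ} {v z : Y} (hmin : ∀ u, ψ v ≤ ψ u) (hq : QB ψ z v) :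
    0 ≤ clarkeDeriv ψ v z := by
  refine le_clarke_of_frequently ?_ hq
  rw [Filter.frequently_iff]
  intro S hS
  unfold Fq at hS
  rw [Filter.mem_prod_iff] at hS
  obtain ⟨A, hA, B, hB, hAB⟩ := hS
  have hB' : B ∩ Ioi 0 ∈ nhdsWithin (0:ℝ) (Ioi 0) := inter_mem hB self_mem_nhdsWithin
  obtain ⟨b, hbB, hb0⟩ := Filter.nonempty_of_mem hB'
  refine ⟨(v, b), hAB ⟨mem_of_mem_nhds hA, hbB⟩, ?_⟩
  unfold cq
  exact div_nonneg (sub_nonneg.mpr (hmin _)) (le_of_lt hb0)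

end Toolkit2

section OneDim
variable {Y : Type*} [NormedAddCommGroup Y] [NormedSpace ℝ Y]

lemma cq_line (φ : Y → ℝ) (x d : Y) (c : ℝ) (p : ℝ × ℝ) :
    cq (fun τ : ℝ => φ (x + τ • d)) c p = cq φ (c • d) (x + p.1 • d, p.2) := by
  unfold cq
  simp only []
  have h2 : x + (p.1 + p.2 • c) • d = x + p.1 • d + p.2 • (c • d) := by
    rw [add_smul, smul_smul, ← add_assoc, smul_eq_mul]
  rw [h2]

lemma tendsto_line (x d : Y) (s : ℝ) :
    Tendsto (fun p : ℝ × ℝ => (x + p.1 • d, p.2)) (Fq s) (Fq (x + s • d)) := by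
  unfold Fq
  refine Tendsto.prodMk ?_ tendsto_snd
  have hc : Continuous (fun u : ℝ => x + u • d) := by continuity
  exact (hc.tendsto s).comp tendsto_fst

lemma QB.line {φ : Y → ℝ} {x d : Y} {c s : ℝ} (h : QB φ (c • d) (x + s • d)) :
    QB (fun τ : ℝ => φ (x + τ • d)) c s :=
  QB.trans _ (tendsto_line x d s) (cq_line φ x d c) h

lemma clarke_line_le {φ : Y → ℝ} {x d : Y} {c s : ℝ} (hq' : QB φ (c • d) (x + s • d)) :
    clarkeDeriv (fun τ : ℝ => φ (x + τ • d)) s c ≤ clarkeDeriv φ (x + s • d) (c • d) :=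
  clarke_trans _ (tendsto_line x d s) (cq_line φ x d c) (QB.line hq') hq'

/-- Fundamental decrease estimate -/
lemma L1 {h : ℝ → ℝ} {a b M : ℝ} (hab : a ≤ b) (hcont : ContinuousOn h (Icc a b))
    (hq : ∀ t ∈ Ico a b, QB h (1:ℝ) t) (hd : ∀ t ∈ Ico a b, clarkeDeriv h t 1 ≤ M) :
    h b - h a ≤ M * (b - a) := by
  have key : ∀ ε > 0, h b - h a ≤ (M + ε) * (b - a) := by
    intro ε hε
    set S := {t : ℝ | t ∈ Icc a b ∧ h t - h a ≤ (M + ε) * (t - a)} with hS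
    have haS : a ∈ S := ⟨⟨le_rfl, hab⟩, by simp⟩
    have hbdd : BddAbove S := ⟨b, fun t ht => ht.1.2⟩
    have hne : S.Nonempty := ⟨a, haS⟩
    set c := sSup S with hc
    have hcI : c ∈ Icc a b := ⟨le_csSup hbdd haS, csSup_le hne fun t ht => ht.1.2⟩
    have hcS : c ∈ S := by
      obtain ⟨u, humono, hut, humem⟩ := exists_seq_tendsto_sSup hne hbdd
      have hmem : ∀ n, u n ∈ Icc a b := fun n => (humem n).1
      have h1 : Tendsto (fun n => h (u n) - h a) atTop (nhds (h c - h a)) := by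
        have hwc : Tendsto u atTop (nhdsWithin c (Icc a b)) := by
          rw [tendsto_nhdsWithin_iff]
          exact ⟨hut, Eventually.of_forall hmem⟩
        exact ((hcont c hcI).tendsto.comp hwc).sub tendsto_const_nhds
      have h2 : Tendsto (fun n => (M + ε) * (u n - a)) atTop (nhds ((M + ε) * (c - a))) :=
        (hut.sub tendsto_const_nhds).const_mul _
      refine ⟨hcI, le_of_tendsto_of_tendsto' h1 h2 fun n => (humem n).2⟩
    rcases eq_or_lt_of_le hcI.2 with hcb | hcb
    · have := hcS.2; rwa [hcb] at this
    · exfalso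
      have hcIco : c ∈ Ico a b := ⟨hcI.1, hcb⟩
      have hlim : clarkeDeriv h c 1 < M + ε := lt_of_le_of_lt (hd c hcIco) (by linarith)
      have hev : ∀ᶠ p in Fq c, cq h 1 p < M + ε := ev_cq_lt hlim (hq c hcIco)
      have hsl : Tendsto (fun lam : ℝ => ((c : ℝ), lam)) (nhdsWithin (0:ℝ) (Ioi 0)) (Fq c) := by
        unfold Fq
        exact Tendsto.prodMk tendsto_const_nhds tendsto_id
      have hev2 : ∀ᶠ lam in nhdsWithin (0:ℝ) (Ioi 0), cq h 1 (c, lam) < M + ε :=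
        hsl.eventually hev
      have hmemIoo : Ioo (0:ℝ) (b - c) ∈ nhdsWithin (0:ℝ) (Ioi 0) :=
        Ioo_mem_nhdsGT_of_mem ⟨le_rfl, sub_pos.mpr hcb⟩
      obtain ⟨lam, hlt, hIoo⟩ :=
        (hev2.and (eventually_of_mem hmemIoo fun x hx => hx)).exists
      have hlam0 : 0 < lam := hIoo.1
      have ht' : c + lam ∈ S := by
        have hineq : h (c + lam) - h c ≤ (M + ε) * lam := by
          have : cq h 1 (c, lam) = (h (c + lam) - h c) / lam := by
            unfold cq; simp
          rw [this] at hlt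
          have := (div_lt_iff₀ hlam0).mp hlt
          linarith [this]
        refine ⟨⟨by linarith [hcI.1], by linarith [hIoo.2]⟩, ?_⟩
        have := hcS.2
        have : h (c + lam) - h a ≤ (M + ε) * lam + (M + ε) * (c - a) := by linarith
        calc h (c + lam) - h a ≤ (M + ε) * lam + (M + ε) * (c - a) := this
          _ = (M + ε) * (c + lam - a) := by ring
      have : c + lam ≤ c := le_csSup hbdd ht'
      linarith
  rcases eq_or_lt_of_le hab with h1 | h1
  · subst h1; simpa using (key 1 one_pos)
  · by_contra hcon
    push_neg at hcon
    set ε := (h b - h a - M * (b - a)) / (2 * (b - a)) with hεd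
    have hε : 0 < ε := by
      apply div_pos
      · nlinarith
      · nlinarith
    have := key ε hε
    rw [hεd] at this
    have hba : 0 < b - a := by linarith
    have hhalf : (h b - h a - M * (b - a)) / (2 * (b - a)) * (b - a)
        = (h b - h a - M * (b - a)) / 2 := by
      field_simp
    rw [add_mul, hhalf] at this
    linarith

/-- strong midpoint convexity from relaxed monotonicity of the Clarke derivative -/
lemma midpt {h : ℝ → ℝ} {s t : ℝ} (hst : s < t) (hcont : ContinuousOn h (Icc s t))
    (hq1 : ∀ u ∈ Icc s t, QB h (1:ℝ) u) (hqm : ∀ u ∈ Icc s t, QB h (-1:ℝ) u)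
    (P : ∀ u v : ℝ, s ≤ u → u < v → v ≤ t → clarkeDeriv h u 1 + clarkeDeriv h v (-1) ≤ 0) :
    2 * h ((s + t) / 2) ≤ h s + h t := by
  set m := (s + t) / 2 with hm
  have hsm : s < m := by rw [hm]; linarith
  have hmt : m < t := by rw [hm]; linarith
  have step1 : ∀ u ∈ Ioc m t, clarkeDeriv h u (-1) ≤ (h s - h m) / (m - s) := by
    intro u hu
    have hL1 : h m - h s ≤ (-clarkeDeriv h u (-1)) * (m - s) := by
      refine L1 hsm.le (hcont.mono (Icc_subset_Icc le_rfl hmt.le)) ?_ ?_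
      · intro w hw
        exact hq1 w ⟨hw.1, hw.2.le.trans hmt.le⟩
      · intro w hw
        have := P w u hw.1 (lt_of_lt_of_le hw.2 hu.1.le) hu.2
        linarith
    rw [le_div_iff₀ (by linarith : (0:ℝ) < m - s)]
    linarith
  -- reflected function
  set k := fun τ : ℝ => h (t + τ • (-1:ℝ)) with hk
  have hk0 : k 0 = h t := by simp [hk]
  have hktm : k (t - m) = h m := by
    simp only [hk, smul_eq_mul, mul_neg_one]
    ring_nf
  have haff : ∀ τ : ℝ, t + τ • (-1:ℝ) = t - τ := by
    intro τ; simp [smul_eq_mul]; ring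
  have hmaps : ∀ τ ∈ Icc (0:ℝ) (t - m), t - τ ∈ Icc s t := by
    intro τ hτ
    constructor <;> [linarith [hτ.2, hsm]; linarith [hτ.1]]
  have hkcont : ContinuousOn k (Icc 0 (t - m)) := by
    have hc2 : Continuous fun τ : ℝ => t + τ • (-1:ℝ) := by continuity
    refine ContinuousOn.comp hcont hc2.continuousOn ?_
    intro τ hτ
    simp only []
    rw [haff]
    exact hmaps τ hτ
  have hL2 : k (t - m) - k 0 ≤ ((h s - h m) / (m - s)) * (t - m - 0) := by
    refine L1 (by linarith) hkcont ?_ ?_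
    · intro τ hτ
      have : QB h ((1:ℝ) • (-1:ℝ)) (t + τ • (-1:ℝ)) := by
        rw [one_smul, haff]
        exact hqm (t - τ) (hmaps τ ⟨hτ.1, hτ.2.le⟩)
      exact QB.line this
    · intro τ hτ
      have hQB : QB h ((1:ℝ) • (-1:ℝ)) (t + τ • (-1:ℝ)) := by
        rw [one_smul, haff]
        exact hqm (t - τ) (hmaps τ ⟨hτ.1, hτ.2.le⟩)
      have h1 : clarkeDeriv k τ 1 ≤ clarkeDeriv h (t + τ • (-1:ℝ)) ((1:ℝ) • (-1:ℝ)) :=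
        clarke_line_le hQB
      rw [one_smul, haff] at h1
      refine h1.trans (step1 (t - τ) ⟨by linarith [hτ.2], by linarith [hτ.1]⟩)
  rw [hk0, hktm] at hL2
  have htm : t - m = m - s := by rw [hm]; ring
  rw [htm] at hL2
  have hms : (0:ℝ) < m - s := by linarith
  have : (h s - h m) / (m - s) * (m - s - 0) = h s - h m := by
    field_simp
    ring
  rw [this] at hL2
  linarith

end OneDim

section Elliptic
variable {V X : Type*} [NormedAddCommGroup V] [NormedSpace ℝ V] [CompleteSpace V]
  [NormedAddCommGroup X] [NormedSpace ℝ X]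

variable (γ : V →L[ℝ] X) (A : V →L[ℝ] V →L[ℝ] ℝ) (J : X → X → ℝ)

/-- the energy functional -/
noncomputable def psiF (ℓ : V →L[ℝ] ℝ) (w : X) : V → ℝ :=
  fun v => ((1/2) * A v v - ℓ v) + J w (γ v)

lemma bLL (hJa : ∀ w : X, LocallyLipschitz (J w)) (w : X) :
    LocallyLipschitz (fun v : V => J w (γ v)) :=
  (hJa w).comp (γ.lipschitz.locallyLipschitz)

lemma QBb (hJa : ∀ w : X, LocallyLipschitz (J w)) (w : X) (z y : V) :
    QB (fun v : V => J w (γ v)) z y :=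
  QB.of_locallyLipschitz (bLL γ J hJa w) y z

lemma clarke_gamma_le (hJa : ∀ w : X, LocallyLipschitz (J w)) (w : X) (v z : V) :
    clarkeDeriv (fun u : V => J w (γ u)) v z ≤ clarkeDeriv (J w) (γ v) (γ z) := by
  refine clarke_trans (fun p : V × ℝ => (γ p.1, p.2)) ?_ ?_ (QBb γ J hJa w z v)
    (QB.of_locallyLipschitz (hJa w) (γ v) (γ z))
  · unfold Fq
    exact Tendsto.prodMk ((γ.continuous.tendsto v).comp tendsto_fst) tendsto_snd
  · intro p
    unfold cq
    simp only [map_add, _root_.map_smul]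

lemma tendsto_cq_quad (hAsym : ∀ u v : V, A u v = A v u) (ℓ : V →L[ℝ] ℝ) (y z : V) :
    Tendsto (cq (fun v => (1/2) * A v v - ℓ v) z) (Fq y)
      (nhds (A y z - ℓ z)) := by
  have h := tendsto_cq_of_eq (y := y)
    (G := fun p : V × ℝ => (A.flip z) p.1 + p.2 / 2 * A z z - ℓ z)
    (a := fun v => (1/2) * A v v - ℓ v) (z := z) ?_ ?_
  · simpa using h
  · refine Continuous.sub (Continuous.add ?_ ?_) continuous_const
    · exact (A.flip z).continuous.comp continuous_fst
    · exact (continuous_snd.div_const 2).mul continuous_const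
  · rintro ⟨u, lam⟩ hlam
    have hlam' : lam ≠ 0 := ne_of_gt hlam
    unfold cq
    simp only [map_add, _root_.map_smul, ContinuousLinearMap.add_apply,
      ContinuousLinearMap.coe_smul', Pi.smul_apply, smul_eq_mul,
      ContinuousLinearMap.flip_apply]
    rw [hAsym z u]
    field_simp
    ring

lemma QBpsi (hJa : ∀ w : X, LocallyLipschitz (J w)) (hAsym : ∀ u v : V, A u v = A v u)
    (ℓ : V →L[ℝ] ℝ) (w : X) (z y : V) : QB (psiF γ A J ℓ w) z y :=
  QB.add (QB.of_tendsto (tendsto_cq_quad A hAsym ℓ y z)) (QBb γ J hJa w z y)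

lemma clarke_psi_le (hJa : ∀ w : X, LocallyLipschitz (J w)) (hAsym : ∀ u v : V, A u v = A v u)
    (ℓ : V →L[ℝ] ℝ) (w : X) (y z : V) :
    clarkeDeriv (psiF γ A J ℓ w) y z ≤
      (A y z - ℓ z) + clarkeDeriv (J w) (γ y) (γ z) := by
  refine (clarke_add_le_of_tendsto (tendsto_cq_quad A hAsym ℓ y z)
    (QBb γ J hJa w z y)).trans ?_
  exact add_le_add le_rfl (clarke_gamma_le γ J hJa w y z)

lemma VI_of_min (hJa : ∀ w : X, LocallyLipschitz (J w)) (hAsym : ∀ u v : V, A u v = A v u)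
    (ℓ : V →L[ℝ] ℝ) (w : X) (v : V) (hmin : ∀ u, psiF γ A J ℓ w v ≤ psiF γ A J ℓ w u) :
    ∀ z, ℓ z ≤ A v z + clarkeDeriv (J w) (γ v) (γ z) := by
  intro z
  have h0 : (0:ℝ) ≤ clarkeDeriv (psiF γ A J ℓ w) v z :=
    zero_le_clarke_of_min hmin (QBpsi γ A J hJa hAsym ℓ w z v)
  have h1 := clarke_psi_le γ A J hJa hAsym ℓ w v z
  linarith

end Elliptic

section Elliptic2
variable {V X : Type*} [NormedAddCommGroup V] [NormedSpace ℝ V] [CompleteSpace V]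
  [NormedAddCommGroup X] [NormedSpace ℝ X]
variable (γ : V →L[ℝ] X) (A : V →L[ℝ] V →L[ℝ] ℝ) (J : X → X → ℝ)

lemma tendsto_cq_tilt (β s c : ℝ) :
    Tendsto (cq (fun τ : ℝ => -(β/2) * τ^2) c) (Fq s) (nhds (-(β * s * c))) := by
  have h := tendsto_cq_of_eq (y := s) (z := c) (a := fun τ : ℝ => -(β/2) * τ^2)
    (G := fun p : ℝ × ℝ => -(β/2) * (2*p.1*c + p.2*c^2)) ?_ ?_
  · have he : -(β * s * c) = -(β/2) * (2*s*c + 0*c^2) := by ring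
    rw [he]; exact h
  · continuity
  · rintro ⟨u, lam⟩ hlam
    have hlam' : (lam:ℝ) ≠ 0 := ne_of_gt hlam
    unfold cq
    simp only [smul_eq_mul]
    field_simp
    ring

lemma tendsto_cq_smoothline (hAsym : ∀ u v : V, A u v = A v u)
    (ℓ : V →L[ℝ] ℝ) (β : ℝ) (x d : V) (u c : ℝ) :
    Tendsto (cq (fun τ : ℝ => ((1/2) * A (x + τ • d) (x + τ • d) - ℓ (x + τ • d))
        + (-(β/2) * τ^2)) c) (Fq u)
      (nhds ((A (x + u • d) (c • d) - ℓ (c • d)) + -(β * u * c))) := by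
  have h1 : Tendsto (cq (fun τ : ℝ => (1/2) * A (x + τ • d) (x + τ • d) - ℓ (x + τ • d)) c)
      (Fq u) (nhds (A (x + u • d) (c • d) - ℓ (c • d))) := by
    have hcomp := (tendsto_cq_quad A hAsym ℓ (x + u • d) (c • d)).comp (tendsto_line x d u)
    refine Tendsto.congr (fun p => ?_) hcomp
    exact (cq_line (fun v => (1/2) * A v v - ℓ v) x d c p).symm
  have h2 := tendsto_cq_tilt β u c
  have := h1.add h2
  refine Tendsto.congr (fun p => ?_) this
  exact (cq_add _ _ c p).symm

lemma cdle_lemma (hAsym : ∀ u v : V, A u v = A v u)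
    (hJa : ∀ w : X, LocallyLipschitz (J w)) (ℓ : V →L[ℝ] ℝ) (w : X)
    (β : ℝ) (x d : V) (u c : ℝ) :
    clarkeDeriv (fun τ : ℝ => (((1/2) * A (x + τ • d) (x + τ • d) - ℓ (x + τ • d))
      + (-(β/2) * τ^2)) + J w (γ (x + τ • d))) u c ≤
      ((A (x + u • d) (c • d) - ℓ (c • d)) + -(β * u * c))
        + clarkeDeriv (J w) (γ (x + u • d)) (γ (c • d)) := by
  have s1 := clarke_add_le_of_tendsto
      (a := fun τ : ℝ => ((1/2) * A (x + τ • d) (x + τ • d) - ℓ (x + τ • d))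
        + (-(β/2) * τ^2))
      (b := fun τ : ℝ => J w (γ (x + τ • d)))
      (tendsto_cq_smoothline A hAsym ℓ β x d u c)
      (QB.line (φ := fun v : V => J w (γ v)) (x := x) (d := d) (c := c) (s := u)
        (QBb γ J hJa w (c • d) (x + u • d)))
  have s2 : clarkeDeriv (fun τ : ℝ => J w (γ (x + τ • d))) u c ≤
      clarkeDeriv (fun v : V => J w (γ v)) (x + u • d) (c • d) :=
    clarke_line_le (φ := fun v : V => J w (γ v)) (x := x) (d := d) (c := c) (s := u)
      (QBb γ J hJa w (c • d) (x + u • d))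
  have s3 := clarke_gamma_le γ J hJa w (x + u • d) (c • d)
  linarith

lemma QBh_lemma (hAsym : ∀ u v : V, A u v = A v u)
    (hJa : ∀ w : X, LocallyLipschitz (J w)) (ℓ : V →L[ℝ] ℝ) (w : X)
    (β : ℝ) (x d : V) (u c : ℝ) :
    QB (fun τ : ℝ => (((1/2) * A (x + τ • d) (x + τ • d) - ℓ (x + τ • d))
      + (-(β/2) * τ^2)) + J w (γ (x + τ • d))) c u :=
  QB.add
    (a := fun τ : ℝ => ((1/2) * A (x + τ • d) (x + τ • d) - ℓ (x + τ • d))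
      + (-(β/2) * τ^2))
    (b := fun τ : ℝ => J w (γ (x + τ • d)))
    (QB.of_tendsto (tendsto_cq_smoothline A hAsym ℓ β x d u c))
    (QB.line (φ := fun v : V => J w (γ v)) (x := x) (d := d) (c := c) (s := u)
      (QBb γ J hJa w (c • d) (x + u • d)))

set_option maxHeartbeats 1000000 in
/-- Strong midpoint convexity of the energy functional. -/
lemma psi_midpoint (mA mJ1 mJ2 : ℝ) (hAsym : ∀ u v : V, A u v = A v u)
    (hAco : ∀ u : V, mA * ‖u‖ ^ 2 ≤ A u u)
    (hJa : ∀ w : X, LocallyLipschitz (J w)) (hmJ1 : 0 ≤ mJ1)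
    (hJc : ∀ w₁ w₂ v₁ v₂ : X,
      clarkeDeriv (J w₁) v₁ (v₂ - v₁) + clarkeDeriv (J w₂) v₂ (v₁ - v₂) ≤
        mJ1 * ‖v₁ - v₂‖ ^ 2 + mJ2 * ‖w₁ - w₂‖ * ‖v₁ - v₂‖)
    (ℓ : V →L[ℝ] ℝ) (w : X) (x y : V) :
    psiF γ A J ℓ w ((1/2 : ℝ) • (x + y)) ≤
      (1/2) * psiF γ A J ℓ w x + (1/2) * psiF γ A J ℓ w y
        - (mA - mJ1 * ‖γ‖^2)/8 * ‖y - x‖^2 := by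
  set d := y - x with hd
  set β := (mA - mJ1 * ‖γ‖^2) * ‖d‖^2 with hβ
  set h := fun τ : ℝ => (((1/2) * A (x + τ • d) (x + τ • d) - ℓ (x + τ • d))
      + (-(β/2) * τ^2)) + J w (γ (x + τ • d)) with hhd
  -- pointwise Clarke derivative bound
  have cdle : ∀ u c : ℝ, clarkeDeriv h u c ≤
      ((A (x + u • d) (c • d) - ℓ (c • d)) + -(β * u * c))
        + clarkeDeriv (J w) (γ (x + u • d)) (γ (c • d)) := by
    intro u c
    rw [hhd]
    exact cdle_lemma γ A J hAsym hJa ℓ w β x d u c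
  have hQBh : ∀ (c : ℝ), ∀ u ∈ Icc (0:ℝ) 1, QB h c u := by
    intro c u _
    rw [hhd]
    exact QBh_lemma γ A J hAsym hJa ℓ w β x d u c
  have hcont : Continuous h := by
    have hline : Continuous fun τ : ℝ => x + τ • d := by continuity
    have h1 : Continuous fun τ : ℝ => (1/2) * A (x + τ • d) (x + τ • d) := by
      refine Continuous.mul continuous_const ?_
      have hA2 : Continuous fun v : V => A v v :=
        A.continuous₂.comp (continuous_id.prodMk continuous_id)
      exact hA2.comp hline
    have h2 : Continuous fun τ : ℝ => ℓ (x + τ • d) := ℓ.continuous.comp hline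
    have h3 : Continuous fun τ : ℝ => J w (γ (x + τ • d)) :=
      (hJa w).continuous.comp (γ.continuous.comp hline)
    have h4 : Continuous fun τ : ℝ => -(β/2) * τ^2 :=
      continuous_const.mul (continuous_pow 2)
    rw [hhd]
    exact ((h1.sub h2).add h4).add h3
  have P : ∀ u v : ℝ, 0 ≤ u → u < v → v ≤ 1 →
      clarkeDeriv h u 1 + clarkeDeriv h v (-1) ≤ 0 := by
    intro u v _ huv _
    set e := v - u with hev
    have he : 0 < e := by simp [hev]; linarith
    set p := γ (x + u • d) with hp
    set q := γ (x + v • d) with hq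
    have hqp : q - p = e • (γ d) := by
      rw [hp, hq, ← map_sub, ← _root_.map_smul]
      congr 1
      rw [hev]
      module
    have c1 := cdle u 1
    have c2 := cdle v (-1)
    rw [one_smul] at c1
    rw [neg_smul, one_smul] at c2
    -- A and ℓ simplifications in c2
    have hA2 : A (x + v • d) (-d) = -(A (x + v • d) d) := by rw [map_neg]
    have hl2 : ℓ (-d) = -(ℓ d) := by rw [map_neg]
    have hg2 : γ (-d) = -(γ d) := by rw [map_neg]
    rw [hA2, hl2, hg2] at c2
    -- J-term estimates
    have hJq1 : QB (J w) (γ d) p := QB.of_locallyLipschitz (hJa w) p (γ d)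
    have hJq1' : QB (J w) (e • γ d) p := QB.of_locallyLipschitz (hJa w) p _
    have hJq2 : QB (J w) (-(γ d)) q := QB.of_locallyLipschitz (hJa w) q _
    have hJq2' : QB (J w) (e • -(γ d)) q := QB.of_locallyLipschitz (hJa w) q _
    have sm1 : e * clarkeDeriv (J w) p (γ d) ≤ clarkeDeriv (J w) p (e • γ d) :=
      clarke_smul_le he hJq1 hJq1'
    have sm2 : e * clarkeDeriv (J w) q (-(γ d)) ≤ clarkeDeriv (J w) q (e • -(γ d)) :=
      clarke_smul_le he hJq2 hJq2'
    have heq1 : e • γ d = q - p := hqp.symm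
    have heq2 : e • -(γ d) = p - q := by rw [smul_neg, ← hqp]; abel
    rw [heq1] at sm1
    rw [heq2] at sm2
    have hJcc := hJc w w p q
    simp only [sub_self, norm_zero, mul_zero, zero_mul, add_zero] at hJcc
    -- norm computation
    have hnormpq : ‖p - q‖ ≤ e * (‖γ‖ * ‖d‖) := by
      have : p - q = -(e • γ d) := by rw [← hqp]; abel
      rw [this, norm_neg, norm_smul, Real.norm_eq_abs, abs_of_pos he]
      have := γ.le_opNorm d
      nlinarith
    have hJsum : e * (clarkeDeriv (J w) p (γ d) + clarkeDeriv (J w) q (-(γ d)))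
        ≤ mJ1 * (e * (‖γ‖ * ‖d‖))^2 := by
      have h0 : (0:ℝ) ≤ ‖p - q‖ := norm_nonneg _
      have hsq : ‖p - q‖^2 ≤ (e * (‖γ‖ * ‖d‖))^2 := by nlinarith [hnormpq, h0]
      have hn : mJ1 * ‖p - q‖^2 ≤ mJ1 * (e * (‖γ‖ * ‖d‖))^2 :=
        mul_le_mul_of_nonneg_left hsq hmJ1
      calc e * (clarkeDeriv (J w) p (γ d) + clarkeDeriv (J w) q (-(γ d)))
          = e * clarkeDeriv (J w) p (γ d) + e * clarkeDeriv (J w) q (-(γ d)) := by ring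
        _ ≤ clarkeDeriv (J w) p (q - p) + clarkeDeriv (J w) q (p - q) := add_le_add sm1 sm2
        _ ≤ mJ1 * ‖p - q‖^2 := hJcc
        _ ≤ mJ1 * (e * (‖γ‖ * ‖d‖))^2 := hn
    -- A-term estimate
    have hAterm : A (x + u • d) d - A (x + v • d) d ≤ -(e * (mA * ‖d‖^2)) := by
      have hxx : x + u • d - (x + v • d) = (u - v) • d := by
        rw [sub_smul]; abel
      have hsub : A (x + u • d) d - A (x + v • d) d = ((u - v) • (A d)) d := by
        rw [← ContinuousLinearMap.sub_apply, ← map_sub, hxx, _root_.map_smul]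
      rw [hsub]
      have : ((u - v) • (A d)) d = (u - v) * A d d := by
        rw [ContinuousLinearMap.smul_apply, smul_eq_mul]
      rw [this]
      have hco := hAco d
      have huv' : u - v = -e := by rw [hev]; ring
      rw [huv']
      nlinarith
    -- combine
    have hJd : clarkeDeriv (J w) p (γ d) + clarkeDeriv (J w) q (-(γ d))
        ≤ e * (mJ1 * (‖γ‖ * ‖d‖)^2) := by
      have h2 := hJsum
      have : mJ1 * (e * (‖γ‖ * ‖d‖))^2 = e * (e * (mJ1 * (‖γ‖ * ‖d‖)^2)) := by ring
      rw [this] at h2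
      exact le_of_mul_le_mul_left (by linarith [h2]) he
    have hβe : -(β * u * 1) + -(β * v * (-1)) = β * e := by rw [hev]; ring
    have final : clarkeDeriv h u 1 + clarkeDeriv h v (-1) ≤
        (A (x + u • d) d - A (x + v • d) d) + β * e +
          (clarkeDeriv (J w) p (γ d) + clarkeDeriv (J w) q (-(γ d))) := by
      rw [← hp] at c1
      rw [← hq] at c2
      linarith
    have hβexp : β * e = e * ((mA - mJ1 * ‖γ‖^2) * ‖d‖^2) := by rw [hβ]; ring
    have : (A (x + u • d) d - A (x + v • d) d) + β * e +
        (clarkeDeriv (J w) p (γ d) + clarkeDeriv (J w) q (-(γ d))) ≤ 0 := by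
      rw [hβexp]
      have := hAterm
      have := hJd
      nlinarith [hJd, hAterm]
    linarith
  by_cases hxy : y = x
  · rw [hxy]
    have hmid : ((1:ℝ)/2) • (x + x) = x := by
      rw [← two_smul ℝ x, smul_smul]
      norm_num
    rw [hmid]
    have hdd : d = 0 := by rw [hd, hxy, sub_self]
    rw [hdd]
    simp
    linarith [le_refl (psiF γ A J ℓ w x)]
  · have hmain := midpt (h := h) (s := 0) (t := 1) zero_lt_one hcont.continuousOn
      (hQBh 1) (hQBh (-1)) (fun u v hu huv hv => P u v hu huv hv)
    have h0 : h 0 = psiF γ A J ℓ w x := by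
      simp [hhd, psiF]
    have h1 : h 1 = psiF γ A J ℓ w y - β/2 := by
      have hx1 : x + (1:ℝ) • d = y := by rw [hd]; module
      simp only [hhd, hx1, one_pow, psiF]
      ring
    have hhalf : h ((0 + 1)/2) = psiF γ A J ℓ w ((1/2 : ℝ) • (x + y)) - β/8 := by
      have hxh : x + ((0 + (1:ℝ))/2) • d = (1/2 : ℝ) • (x + y) := by
        rw [hd]; module
      simp only [hhd, hxh, psiF]
      ring_nf
    rw [h0, h1, hhalf] at hmain
    have hβval : β = (mA - mJ1 * ‖γ‖^2) * ‖y - x‖^2 := by rw [hβ, hd]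
    have : psiF γ A J ℓ w ((1/2 : ℝ) • (x + y)) ≤
        (1/2) * psiF γ A J ℓ w x + (1/2) * psiF γ A J ℓ w y - β/8 := by linarith
    rw [hβval] at this
    linarith [this]

end Elliptic2

section Elliptic3
variable {V X : Type*} [NormedAddCommGroup V] [NormedSpace ℝ V] [CompleteSpace V]
  [NormedAddCommGroup X] [NormedSpace ℝ X]
variable (γ : V →L[ℝ] X) (A : V →L[ℝ] V →L[ℝ] ℝ) (J : X → X → ℝ)

set_option maxHeartbeats 1000000 in
lemma Jgrowth (mJ1 mJ2 : ℝ) (hJa : ∀ w : X, LocallyLipschitz (J w)) (hmJ1 : 0 ≤ mJ1)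
    (hJc : ∀ w₁ w₂ v₁ v₂ : X,
      clarkeDeriv (J w₁) v₁ (v₂ - v₁) + clarkeDeriv (J w₂) v₂ (v₁ - v₂) ≤
        mJ1 * ‖v₁ - v₂‖ ^ 2 + mJ2 * ‖w₁ - w₂‖ * ‖v₁ - v₂‖) (w : X) :
    ∃ L : ℝ, 0 ≤ L ∧ ∀ y : X, J w 0 - mJ1 * ‖y‖^2 - L * ‖y‖ ≤ J w y := by
  obtain ⟨K, r, hr, hK0, hK⟩ := (hJa w).exists_ball 0
  refine ⟨K, hK0, fun y => ?_⟩
  set M := mJ1 * ‖y‖^2 + K * ‖y‖ with hM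
  have hcont : ContinuousOn (fun τ : ℝ => J w (y + τ • (-y))) (Icc 0 1) := by
    have : Continuous (fun τ : ℝ => J w (y + τ • (-y))) := by
      have hline : Continuous fun τ : ℝ => y + τ • (-y) := by continuity
      exact (hJa w).continuous.comp hline
    exact this.continuousOn
  have hL := L1 (h := fun τ : ℝ => J w (y + τ • (-y))) (a := 0) (b := 1) (M := M)
    zero_le_one hcont ?_ ?_
  · have h10 : y + (1:ℝ) • (-y) = 0 := by module
    have h00 : y + (0:ℝ) • (-y) = y := by module
    simp only [h10, h00] at hL
    simp only [hM] at hL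
    linarith
  · intro t _
    exact QB.line (φ := J w) (x := y) (d := -y) (c := 1) (s := t)
      (QB.of_locallyLipschitz (hJa w) _ _)
  · intro τ hτ
    set t' := 1 - τ with ht'd
    have ht'0 : 0 < t' := by simp [ht'd]; linarith [hτ.2]
    have ht'1 : t' ≤ 1 := by simp [ht'd]; linarith [hτ.1]
    set pt := y + τ • (-y) with hptd
    have hpt : pt = t' • y := by rw [hptd, ht'd]; module
    have step1 : clarkeDeriv (fun σ : ℝ => J w (y + σ • (-y))) τ 1 ≤
        clarkeDeriv (J w) pt ((1:ℝ) • (-y)) :=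
      clarke_line_le (φ := J w) (x := y) (d := -y) (c := 1) (s := τ)
        (QB.of_locallyLipschitz (hJa w) _ _)
    rw [one_smul] at step1
    have step2 : t' * clarkeDeriv (J w) pt (-y) ≤ clarkeDeriv (J w) pt (t' • (-y)) :=
      clarke_smul_le ht'0 (QB.of_locallyLipschitz (hJa w) _ _)
        (QB.of_locallyLipschitz (hJa w) _ _)
    have step3 : t' • (-y) = (0:X) - pt := by rw [hpt]; module
    rw [step3] at step2
    have step4 := hJc w w pt 0
    simp only [sub_self, norm_zero, mul_zero, zero_mul, add_zero, sub_zero] at step4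
    have step5 : -(K * ‖pt‖) ≤ clarkeDeriv (J w) 0 pt := by
      have := neg_lip_le_clarke hr hK pt
      simpa using this
    have hptn : ‖pt‖ = t' * ‖y‖ := by
      rw [hpt, norm_smul, Real.norm_eq_abs, abs_of_pos ht'0]
    have hupper : clarkeDeriv (J w) pt ((0:X) - pt) ≤ mJ1 * ‖pt‖^2 + K * ‖pt‖ := by
      linarith [step4, step5]
    have hchain : t' * clarkeDeriv (J w) pt (-y) ≤ mJ1 * (t' * ‖y‖)^2 + K * (t' * ‖y‖) := by
      rw [← hptn]
      exact step2.trans hupper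
    have hfinal : clarkeDeriv (J w) pt (-y) ≤ M := by
      have hdiv : t' * clarkeDeriv (J w) pt (-y) ≤ t' * M := by
        have hMexp : mJ1 * (t' * ‖y‖)^2 + K * (t' * ‖y‖)
            = t' * (mJ1 * t' * ‖y‖^2 + K * ‖y‖) := by ring
        rw [hMexp] at hchain
        refine hchain.trans ?_
        have : mJ1 * t' * ‖y‖^2 + K * ‖y‖ ≤ M := by
          rw [hM]
          nlinarith [mul_nonneg (mul_nonneg hmJ1 (by linarith : (0:ℝ) ≤ 1 - t'))
            (sq_nonneg ‖y‖)]
        nlinarith [this, ht'0]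
      exact le_of_mul_le_mul_left hdiv ht'0
    exact step1.trans hfinal

end Elliptic3

section Elliptic4
variable {V X : Type*} [NormedAddCommGroup V] [NormedSpace ℝ V] [CompleteSpace V]
  [NormedAddCommGroup X] [NormedSpace ℝ X]
variable (γ : V →L[ℝ] X) (A : V →L[ℝ] V →L[ℝ] ℝ) (J : X → X → ℝ)

set_option maxHeartbeats 1000000 in
lemma exists_VI (mA mJ1 mJ2 : ℝ) (hAsym : ∀ u v : V, A u v = A v u)
    (hAco : ∀ u : V, mA * ‖u‖ ^ 2 ≤ A u u)
    (hJa : ∀ w : X, LocallyLipschitz (J w)) (hmJ1 : 0 ≤ mJ1)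
    (hJc : ∀ w₁ w₂ v₁ v₂ : X,
      clarkeDeriv (J w₁) v₁ (v₂ - v₁) + clarkeDeriv (J w₂) v₂ (v₁ - v₂) ≤
        mJ1 * ‖v₁ - v₂‖ ^ 2 + mJ2 * ‖w₁ - w₂‖ * ‖v₁ - v₂‖)
    (hs : 0 < mA - 2 * mJ1 * ‖γ‖ ^ 2)
    (ℓ : V →L[ℝ] ℝ) (w : X) :
    ∃ v : V, ∀ z, ℓ z ≤ A v z + clarkeDeriv (J w) (γ v) (γ z) := by
  set κ := mA - mJ1 * ‖γ‖^2 with hκd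
  have hγ2 : 0 ≤ mJ1 * ‖γ‖^2 := mul_nonneg hmJ1 (sq_nonneg _)
  have hκ : 0 < κ := by rw [hκd]; nlinarith
  set ψ := psiF γ A J ℓ w with hψd
  obtain ⟨L, hL0, hgrow⟩ := Jgrowth J mJ1 mJ2 hJa hmJ1 hJc w
  -- lower bound
  set κ2 := mA - 2 * mJ1 * ‖γ‖^2 with hκ2d
  set C := ‖ℓ‖ + L * ‖γ‖ with hCd
  have hC0 : 0 ≤ C := by
    rw [hCd]
    have := norm_nonneg ℓ
    have := norm_nonneg γ
    nlinarith
  have hlb : ∀ v : V, J w 0 - C^2/(2*κ2) ≤ ψ v := by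
    intro v
    have h1 : mA * ‖v‖^2 ≤ A v v := hAco v
    have h2 : ℓ v ≤ ‖ℓ‖ * ‖v‖ := (le_abs_self _).trans (by
      rw [← Real.norm_eq_abs]
      exact ℓ.le_opNorm v)
    have h3 : J w 0 - mJ1 * ‖γ v‖^2 - L * ‖γ v‖ ≤ J w (γ v) := hgrow (γ v)
    have h4 : ‖γ v‖ ≤ ‖γ‖ * ‖v‖ := γ.le_opNorm v
    have h5 : mJ1 * ‖γ v‖^2 ≤ mJ1 * (‖γ‖ * ‖v‖)^2 := by
      have hn := norm_nonneg (γ v)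
      have hsq : ‖γ v‖^2 ≤ (‖γ‖ * ‖v‖)^2 := by nlinarith [h4]
      exact mul_le_mul_of_nonneg_left hsq hmJ1
    have h6 : L * ‖γ v‖ ≤ L * (‖γ‖ * ‖v‖) := by nlinarith
    have hψv : (κ2/2) * ‖v‖^2 - C * ‖v‖ + J w 0 ≤ ψ v := by
      rw [hψd]
      unfold psiF
      rw [hκ2d, hCd]
      nlinarith [h1, h2, h3, h5, h6]
    refine le_trans ?_ hψv
    have hquad : 0 ≤ (κ2/2) * (‖v‖ - C/κ2)^2 := by positivity
    have hexp : (κ2/2) * (‖v‖ - C/κ2)^2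
        = (κ2/2)*‖v‖^2 - C*‖v‖ + C^2/(2*κ2) := by
      field_simp
      ring
    nlinarith [hquad, hexp]
  have hbdd : BddBelow (Set.range ψ) := by
    refine ⟨J w 0 - C^2/(2*κ2), ?_⟩
    rintro _ ⟨v, rfl⟩
    exact hlb v
  set i := sInf (Set.range ψ) with hid
  have hne : (Set.range ψ).Nonempty := ⟨ψ 0, mem_range_self 0⟩
  have hex : ∀ n : ℕ, ∃ v : V, ψ v < i + 1/((n:ℝ)+1) := by
    intro n
    have hpos : (0:ℝ) < 1/((n:ℝ)+1) := by positivity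
    obtain ⟨a, ⟨v, rfl⟩, hlt⟩ := Real.lt_sInf_add_pos hne hpos
    exact ⟨v, hlt⟩
  choose xs hxs using hex
  have hlow : ∀ n, i ≤ ψ (xs n) := fun n => csInf_le hbdd (mem_range_self _)
  have hmid : ∀ n m : ℕ, (κ/8) * ‖xs m - xs n‖^2 ≤
      (1/2) * (ψ (xs n) - i) + (1/2) * (ψ (xs m) - i) := by
    intro n m
    have h := psi_midpoint γ A J mA mJ1 mJ2 hAsym hAco hJa hmJ1 hJc ℓ w (xs n) (xs m)
    have hi : i ≤ ψ ((1/2 : ℝ) • (xs n + xs m)) := csInf_le hbdd (mem_range_self _)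
    rw [← hψd] at h
    rw [← hκd] at h
    linarith
  have hcauchy : CauchySeq xs := by
    rw [Metric.cauchySeq_iff']
    intro ε hε
    obtain ⟨N, hN⟩ := exists_nat_gt (8/(κ * ε^2))
    refine ⟨N, fun n hn => ?_⟩
    have hb1 : ψ (xs n) - i < 1/((n:ℝ)+1) := by linarith [hxs n]
    have hb2 : ψ (xs N) - i < 1/((N:ℝ)+1) := by linarith [hxs N]
    have hmono : 1/((n:ℝ)+1) ≤ 1/((N:ℝ)+1) := by
      apply one_div_le_one_div_of_le
      · positivity
      · have : (N:ℝ) ≤ (n:ℝ) := Nat.cast_le.mpr hn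
        linarith
    have hk := hmid N n
    have hsq : ‖xs n - xs N‖^2 < 8/(κ * ((N:ℝ)+1)) := by
      have h8 : (κ/8) * ‖xs n - xs N‖^2 < 1/((N:ℝ)+1) := by linarith
      have hN1 : (0:ℝ) < (N:ℝ)+1 := by positivity
      rw [lt_div_iff₀ hN1] at h8
      rw [lt_div_iff₀ (by positivity : (0:ℝ) < κ * ((N:ℝ)+1))]
      nlinarith [h8]
    have hsq2 : 8/(κ * ((N:ℝ)+1)) < ε^2 := by
      have hNgt : 8/(κ * ε^2) < (N:ℝ) := hN
      have hc1 : (0:ℝ) < κ * ε^2 := by positivity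
      rw [div_lt_iff₀ hc1] at hNgt
      have hN1 : (0:ℝ) < κ * ((N:ℝ)+1) := by positivity
      rw [div_lt_iff₀ hN1]
      nlinarith [hNgt, hε, hκ]
    rw [dist_eq_norm]
    have h2 : ‖xs n - xs N‖^2 < ε^2 := lt_trans hsq hsq2
    by_contra hcon
    push_neg at hcon
    nlinarith [h2, hcon, norm_nonneg (xs n - xs N)]
  obtain ⟨v, hv⟩ := cauchySeq_tendsto_of_complete hcauchy
  have hψcont : Continuous ψ := by
    rw [hψd]
    unfold psiF
    have hA2 : Continuous fun v : V => A v v :=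
      A.continuous₂.comp (continuous_id.prodMk continuous_id)
    have h1 : Continuous fun v : V => (1/2) * A v v - ℓ v :=
      (continuous_const.mul hA2).sub ℓ.continuous
    have h2 : Continuous fun v : V => J w (γ v) :=
      (hJa w).continuous.comp γ.continuous
    exact h1.add h2
  have hten : Tendsto (fun n => ψ (xs n)) atTop (nhds (ψ v)) :=
    (hψcont.tendsto v).comp hv
  have hten2 : Tendsto (fun n => ψ (xs n)) atTop (nhds i) := by
    have hub : Tendsto (fun n : ℕ => i + 1/((n:ℝ)+1)) atTop (nhds i) := by
      have h0 : Tendsto (fun n : ℕ => 1/((n:ℝ)+1)) atTop (nhds 0) :=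
        tendsto_one_div_add_atTop_nhds_zero_nat
      have := tendsto_const_nhds.add h0 (f := fun _ : ℕ => i) (x := atTop)
      simpa using this
    refine tendsto_of_tendsto_of_tendsto_of_le_of_le
      (tendsto_const_nhds) hub hlow (fun n => (hxs n).le)
  have hψvi : ψ v = i := tendsto_nhds_unique hten hten2
  have hminv : ∀ u : V, ψ v ≤ ψ u := by
    intro u
    rw [hψvi]
    exact csInf_le hbdd (mem_range_self u)
  exact ⟨v, VI_of_min γ A J hJa hAsym ℓ w v hminv⟩

/-- stability / uniqueness of solutions of the variational inequality -/
lemma VI_stab (mA mJ1 mJ2 : ℝ)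
    (hAco : ∀ u : V, mA * ‖u‖ ^ 2 ≤ A u u) (hmJ1 : 0 ≤ mJ1) (hmJ2 : 0 ≤ mJ2)
    (hJc : ∀ w₁ w₂ v₁ v₂ : X,
      clarkeDeriv (J w₁) v₁ (v₂ - v₁) + clarkeDeriv (J w₂) v₂ (v₁ - v₂) ≤
        mJ1 * ‖v₁ - v₂‖ ^ 2 + mJ2 * ‖w₁ - w₂‖ * ‖v₁ - v₂‖)
    (ℓ₁ ℓ₂ : V →L[ℝ] ℝ) (w₁ w₂ : X) (v₁ v₂ : V)
    (h₁ : ∀ z, ℓ₁ z ≤ A v₁ z + clarkeDeriv (J w₁) (γ v₁) (γ z))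
    (h₂ : ∀ z, ℓ₂ z ≤ A v₂ z + clarkeDeriv (J w₂) (γ v₂) (γ z)) :
    (mA - mJ1 * ‖γ‖^2) * ‖v₁ - v₂‖ ≤ ‖ℓ₁ - ℓ₂‖ + mJ2 * ‖γ‖ * ‖w₁ - w₂‖ := by
  have ha := h₁ (v₂ - v₁)
  have hb := h₂ (v₁ - v₂)
  have hγ1 : γ (v₂ - v₁) = γ v₂ - γ v₁ := map_sub γ _ _
  have hγ2 : γ (v₁ - v₂) = γ v₁ - γ v₂ := map_sub γ _ _
  rw [hγ1] at ha
  rw [hγ2] at hb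
  have hJ := hJc w₁ w₂ (γ v₁) (γ v₂)
  -- A-term
  have hA : A v₁ (v₂ - v₁) + A v₂ (v₁ - v₂) = -(A (v₁ - v₂) (v₁ - v₂)) := by
    have e1 : A v₂ (v₁ - v₂) = -(A v₂ (v₂ - v₁)) := by
      rw [show v₁ - v₂ = -(v₂ - v₁) by abel, map_neg]
    have e2 : A v₁ (v₂ - v₁) - A v₂ (v₂ - v₁) = A (v₁ - v₂) (v₂ - v₁) := by
      rw [← ContinuousLinearMap.sub_apply, ← map_sub]
    have e3 : A (v₁ - v₂) (v₂ - v₁) = -(A (v₁ - v₂) (v₁ - v₂)) := by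
      rw [show v₂ - v₁ = -(v₁ - v₂) by abel, map_neg]
    linarith [e1, e2, e3]
  have hAco2 : mA * ‖v₁ - v₂‖^2 ≤ A (v₁ - v₂) (v₁ - v₂) := hAco _
  -- ℓ-term
  have hℓ : -(‖ℓ₁ - ℓ₂‖ * ‖v₁ - v₂‖) ≤ ℓ₁ (v₂ - v₁) + ℓ₂ (v₁ - v₂) := by
    have : ℓ₁ (v₂ - v₁) + ℓ₂ (v₁ - v₂) = -((ℓ₁ - ℓ₂) (v₁ - v₂)) := by
      rw [ContinuousLinearMap.sub_apply]
      rw [show v₂ - v₁ = -(v₁ - v₂) by abel, map_neg]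
      ring
    rw [this]
    have h1 : (ℓ₁ - ℓ₂) (v₁ - v₂) ≤ ‖ℓ₁ - ℓ₂‖ * ‖v₁ - v₂‖ := by
      refine (le_abs_self _).trans ?_
      rw [← Real.norm_eq_abs]
      exact (ℓ₁ - ℓ₂).le_opNorm _
    linarith
  have hγv : ‖γ v₁ - γ v₂‖ ≤ ‖γ‖ * ‖v₁ - v₂‖ := by
    rw [← map_sub]
    exact γ.le_opNorm _
  have hJub : mJ1 * ‖γ v₁ - γ v₂‖^2 + mJ2 * ‖w₁ - w₂‖ * ‖γ v₁ - γ v₂‖ ≤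
      mJ1 * ‖γ‖^2 * ‖v₁ - v₂‖^2 + mJ2 * ‖w₁ - w₂‖ * (‖γ‖ * ‖v₁ - v₂‖) := by
    have h1 : mJ1 * ‖γ v₁ - γ v₂‖^2 ≤ mJ1 * ‖γ‖^2 * ‖v₁ - v₂‖^2 := by
      have hsq : ‖γ v₁ - γ v₂‖^2 ≤ (‖γ‖ * ‖v₁ - v₂‖)^2 := by
        nlinarith [hγv, norm_nonneg (γ v₁ - γ v₂)]
      calc mJ1 * ‖γ v₁ - γ v₂‖^2 ≤ mJ1 * (‖γ‖ * ‖v₁ - v₂‖)^2 :=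
            mul_le_mul_of_nonneg_left hsq hmJ1
        _ = mJ1 * ‖γ‖^2 * ‖v₁ - v₂‖^2 := by ring
    have h2 : mJ2 * ‖w₁ - w₂‖ * ‖γ v₁ - γ v₂‖ ≤ mJ2 * ‖w₁ - w₂‖ * (‖γ‖ * ‖v₁ - v₂‖) := by
      have := mul_nonneg hmJ2 (norm_nonneg (w₁ - w₂))
      nlinarith
    linarith
  have hmain : (mA - mJ1 * ‖γ‖^2) * ‖v₁ - v₂‖^2 ≤
      (‖ℓ₁ - ℓ₂‖ + mJ2 * ‖γ‖ * ‖w₁ - w₂‖) * ‖v₁ - v₂‖ := by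
    nlinarith [ha, hb, hJ, hA, hAco2, hℓ, hJub]
  rcases eq_or_ne (v₁ - v₂) 0 with hz | hz
  · rw [hz, norm_zero]
    simp only [mul_zero]
    have h1 : (0:ℝ) ≤ ‖ℓ₁ - ℓ₂‖ := norm_nonneg _
    have h2 : (0:ℝ) ≤ mJ2 * ‖γ‖ * ‖w₁ - w₂‖ := by positivity
    linarith
  · have hpos : 0 < ‖v₁ - v₂‖ := norm_pos_iff.mpr hz
    have := hmain
    have hexp : (mA - mJ1 * ‖γ‖^2) * ‖v₁ - v₂‖^2
        = ((mA - mJ1 * ‖γ‖^2) * ‖v₁ - v₂‖) * ‖v₁ - v₂‖ := by ring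
    rw [hexp] at this
    exact le_of_mul_le_mul_right this hpos

end Elliptic4

section Evolution
variable {V X : Type*} [NormedAddCommGroup V] [NormedSpace ℝ V] [CompleteSpace V]
  [NormedAddCommGroup X] [NormedSpace ℝ X]

set_option maxHeartbeats 2000000 in
theorem main_aux
    (γ : V →L[ℝ] X) (A : V →L[ℝ] V →L[ℝ] ℝ)
    (hAsym : ∀ u v : V, A u v = A v u)
    (mA : ℝ)
    (hAco : ∀ u : V, mA * ‖u‖ ^ 2 ≤ A u u)
    (B : V → V →L[ℝ] ℝ)
    (LB : ℝ) (hLB : 0 < LB)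
    (hB : ∀ v w : V, ‖B v - B w‖ ≤ LB * ‖v - w‖)
    (J : X → X → ℝ)
    (hJa : ∀ w : X, LocallyLipschitz (J w))
    (mJ1 mJ2 : ℝ) (hmJ1 : 0 ≤ mJ1) (hmJ2 : 0 ≤ mJ2)
    (hJc : ∀ w₁ w₂ v₁ v₂ : X,
      clarkeDeriv (J w₁) v₁ (v₂ - v₁) + clarkeDeriv (J w₂) v₂ (v₁ - v₂) ≤
        mJ1 * ‖v₁ - v₂‖ ^ 2 + mJ2 * ‖w₁ - w₂‖ * ‖v₁ - v₂‖)
    (T : ℝ) (hT : 0 < T)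
    (f : ℝ → V →L[ℝ] ℝ) (hf : ContinuousOn f (Set.Icc 0 T))
    (u₀ : V)
    (hs : 0 < mA - 2 * mJ1 * ‖γ‖ ^ 2) :
    ∃ v : ℝ → V,
      (ContinuousOn v (Set.Icc 0 T) ∧
        ∀ t ∈ Set.Icc (0 : ℝ) T, ∀ w : V,
          f t w ≤ A (v t) w + B ((∫ s in (0 : ℝ)..t, v s) + u₀) w +
            clarkeDeriv (J (γ ((∫ s in (0 : ℝ)..t, v s) + u₀))) (γ (v t)) (γ w)) ∧
      ∀ v' : ℝ → V,
        (ContinuousOn v' (Set.Icc 0 T) ∧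
          ∀ t ∈ Set.Icc (0 : ℝ) T, ∀ w : V,
            f t w ≤ A (v' t) w + B ((∫ s in (0 : ℝ)..t, v' s) + u₀) w +
              clarkeDeriv (J (γ ((∫ s in (0 : ℝ)..t, v' s) + u₀))) (γ (v' t)) (γ w)) →
        ∀ t ∈ Set.Icc (0 : ℝ) T, v' t = v t := by
  have hT0 : (0:ℝ) ≤ T := hT.le
  set κ := mA - mJ1 * ‖γ‖^2 with hκd
  have hγ2 : 0 ≤ mJ1 * ‖γ‖^2 := mul_nonneg hmJ1 (sq_nonneg _)
  have hκ : 0 < κ := by rw [hκd]; nlinarith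
  -- solution operator
  choose S hS using exists_VI γ A J mA mJ1 mJ2 hAsym hAco hJa hmJ1 hJc hs
  have hSlip : ∀ (ℓ₁ ℓ₂ : V →L[ℝ] ℝ) (w₁ w₂ : X),
      ‖S ℓ₁ w₁ - S ℓ₂ w₂‖ ≤ (‖ℓ₁ - ℓ₂‖ + mJ2 * ‖γ‖ * ‖w₁ - w₂‖) / κ := by
    intro ℓ₁ ℓ₂ w₁ w₂
    have h := VI_stab γ A J mA mJ1 mJ2 hAco hmJ1 hmJ2 hJc ℓ₁ ℓ₂ w₁ w₂ _ _
      (hS ℓ₁ w₁) (hS ℓ₂ w₂)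
    rw [le_div_iff₀ hκ]
    calc ‖S ℓ₁ w₁ - S ℓ₂ w₂‖ * κ = κ * ‖S ℓ₁ w₁ - S ℓ₂ w₂‖ := by ring
      _ ≤ _ := h
  have hSuniq : ∀ (ℓ : V →L[ℝ] ℝ) (w : X) (v₁ v₂ : V),
      (∀ z, ℓ z ≤ A v₁ z + clarkeDeriv (J w) (γ v₁) (γ z)) →
      (∀ z, ℓ z ≤ A v₂ z + clarkeDeriv (J w) (γ v₂) (γ z)) → v₁ = v₂ := by
    intro ℓ w v₁ v₂ h₁ h₂
    have h := VI_stab γ A J mA mJ1 mJ2 hAco hmJ1 hmJ2 hJc ℓ ℓ w w v₁ v₂ h₁ h₂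
    simp only [sub_self, norm_zero, mul_zero, add_zero] at h
    have : ‖v₁ - v₂‖ ≤ 0 := by
      by_contra hcon
      push_neg at hcon
      nlinarith
    rw [← sub_eq_zero]
    exact norm_le_zero_iff.mp this
  -- S is (uncurried) continuous
  have hScont : Continuous (fun p : (V →L[ℝ] ℝ) × X => S p.1 p.2) := by
    have hK0 : (0:ℝ) ≤ (1 + mJ2 * ‖γ‖) / κ := by positivity
    refine LipschitzWith.continuous (K := ⟨(1 + mJ2 * ‖γ‖) / κ, hK0⟩)
      (LipschitzWith.of_dist_le_mul ?_)
    rintro ⟨ℓ₁, w₁⟩ ⟨ℓ₂, w₂⟩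
    have h := hSlip ℓ₁ ℓ₂ w₁ w₂
    rw [dist_eq_norm]
    refine h.trans ?_
    have hd : dist (ℓ₁, w₁) (ℓ₂, w₂) = max (dist ℓ₁ ℓ₂) (dist w₁ w₂) := rfl
    have h1 : ‖ℓ₁ - ℓ₂‖ ≤ dist (ℓ₁, w₁) (ℓ₂, w₂) := by
      rw [hd, ← dist_eq_norm]
      exact le_max_left _ _
    have h2 : ‖w₁ - w₂‖ ≤ dist (ℓ₁, w₁) (ℓ₂, w₂) := by
      rw [hd, ← dist_eq_norm]
      exact le_max_right _ _
    have hdn : (0:ℝ) ≤ dist (ℓ₁, w₁) (ℓ₂, w₂) := dist_nonneg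
    rw [div_le_iff₀ hκ]
    show ‖ℓ₁ - ℓ₂‖ + mJ2 * ‖γ‖ * ‖w₁ - w₂‖ ≤
      (1 + mJ2 * ‖γ‖) / κ * dist (ℓ₁, w₁) (ℓ₂, w₂) * κ
    have hre : (1 + mJ2 * ‖γ‖) / κ * dist (ℓ₁, w₁) (ℓ₂, w₂) * κ
        = (1 + mJ2 * ‖γ‖) * dist (ℓ₁, w₁) (ℓ₂, w₂) := by
      field_simp
    rw [hre]
    have hm : 0 ≤ mJ2 * ‖γ‖ := by positivity
    nlinarith [h1, h2]
  -- extension operator and primitive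
  have hEcont : ∀ g : C(↥(Set.Icc (0:ℝ) T), V),
      Continuous (fun s : ℝ => g (projIcc 0 T hT0 s)) :=
    fun g => (map_continuous g).comp continuous_projIcc
  have hEint : ∀ (g : C(↥(Set.Icc (0:ℝ) T), V)) (a b : ℝ),
      IntervalIntegrable (fun s : ℝ => g (projIcc 0 T hT0 s)) volume a b :=
    fun g a b => (hEcont g).intervalIntegrable a b
  set U : C(↥(Set.Icc (0:ℝ) T), V) → ℝ → V :=
    fun g t => (∫ s in (0:ℝ)..t, g (projIcc 0 T hT0 s)) + u₀ with hUd
  have hUcont : ∀ g, Continuous (U g) := by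
    intro g
    rw [hUd]
    exact (intervalIntegral.continuous_primitive (fun a b => hEint g a b) 0).add
      continuous_const
  -- B is Lipschitz
  have hBlip : LipschitzWith ⟨LB, hLB.le⟩ B := by
    refine LipschitzWith.of_dist_le_mul ?_
    intro v w
    rw [dist_eq_norm, dist_eq_norm]
    exact hB v w
  -- the fixed point operator
  set Φ : C(↥(Set.Icc (0:ℝ) T), V) → C(↥(Set.Icc (0:ℝ) T), V) := fun g =>
    ⟨fun t => S (f ↑t - B (U g ↑t)) (γ (U g ↑t)), by
      have h1 : Continuous fun t : ↥(Set.Icc (0:ℝ) T) => f ↑t := hf.restrict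
      have h2 : Continuous fun t : ↥(Set.Icc (0:ℝ) T) => U g ↑t :=
        (hUcont g).comp continuous_subtype_val
      exact hScont.comp ((h1.sub (hBlip.continuous.comp h2)).prodMk
        (γ.continuous.comp h2))⟩ with hΦd
  have hΦapp : ∀ g (t : ↥(Set.Icc (0:ℝ) T)),
      Φ g t = S (f ↑t - B (U g ↑t)) (γ (U g ↑t)) := fun g t => rfl
  -- step estimate
  set D := (LB + mJ2 * ‖γ‖^2) / κ with hDd
  have hD0 : 0 ≤ D := by
    rw [hDd]
    have : (0:ℝ) ≤ mJ2 * ‖γ‖^2 := by positivity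
    positivity
  have hstep : ∀ g g' (t : ↥(Set.Icc (0:ℝ) T)),
      dist (Φ g t) (Φ g' t) ≤ D * ‖U g ↑t - U g' ↑t‖ := by
    intro g g' t
    rw [hΦapp, hΦapp, dist_eq_norm]
    refine (hSlip _ _ _ _).trans ?_
    have e1 : ‖(f ↑t - B (U g ↑t)) - (f ↑t - B (U g' ↑t))‖ = ‖B (U g' ↑t) - B (U g ↑t)‖ := by
      congr 1
      abel
    have e2 : ‖B (U g' ↑t) - B (U g ↑t)‖ ≤ LB * ‖U g' ↑t - U g ↑t‖ := hB _ _
    have e3 : ‖γ (U g ↑t) - γ (U g' ↑t)‖ ≤ ‖γ‖ * ‖U g ↑t - U g' ↑t‖ := by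
      rw [← map_sub]
      exact γ.le_opNorm _
    rw [e1]
    rw [hDd, div_mul_eq_mul_div, div_le_div_iff_of_pos_right hκ]
    have e4 : ‖U g' ↑t - U g ↑t‖ = ‖U g ↑t - U g' ↑t‖ := norm_sub_rev _ _
    rw [e4] at e2
    have hm : 0 ≤ mJ2 * ‖γ‖ := by positivity
    nlinarith [e2, e3, norm_nonneg (U g ↑t - U g' ↑t)]
  -- difference of primitives
  have hUdiff : ∀ g g' (t : ℝ), 0 ≤ t →
      ‖U g t - U g' t‖ ≤ ∫ s in (0:ℝ)..t,
        ‖g (projIcc 0 T hT0 s) - g' (projIcc 0 T hT0 s)‖ := by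
    intro g g' t ht
    have hsub : U g t - U g' t = ∫ s in (0:ℝ)..t,
        (g (projIcc 0 T hT0 s) - g' (projIcc 0 T hT0 s)) := by
      rw [hUd]
      simp only [add_sub_add_right_eq_sub]
      rw [intervalIntegral.integral_sub (hEint g 0 t) (hEint g' 0 t)]
    rw [hsub]
    exact intervalIntegral.norm_integral_le_integral_norm ht
  -- iteration estimate
  have hiter : ∀ n : ℕ, ∀ g g', ∀ t : ↥(Set.Icc (0:ℝ) T),
      dist ((Φ^[n]) g t) ((Φ^[n]) g' t) ≤
        D^n * (↑t)^n / (n.factorial : ℝ) * dist g g' := by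
    intro n
    induction n with
    | zero =>
      intro g g' t
      simp only [Function.iterate_zero, id_eq, pow_zero, Nat.factorial_zero,
        Nat.cast_one, mul_one, one_mul]
      rw [div_one, one_mul]
      exact ContinuousMap.dist_apply_le_dist t
    | succ n ih =>
      intro g g' t
      rw [Function.iterate_succ_apply', Function.iterate_succ_apply']
      refine (hstep _ _ t).trans ?_
      have ht0 : (0:ℝ) ≤ ↑t := t.2.1
      have htT : (↑t:ℝ) ≤ T := t.2.2
      refine le_trans (mul_le_mul_of_nonneg_left (hUdiff _ _ ↑t ht0) hD0) ?_
      have hmono : (∫ s in (0:ℝ)..↑t,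
          ‖(Φ^[n]) g (projIcc 0 T hT0 s) - (Φ^[n]) g' (projIcc 0 T hT0 s)‖) ≤
          ∫ s in (0:ℝ)..↑t, (D^n / (n.factorial : ℝ) * dist g g') * s^n := by
        refine intervalIntegral.integral_mono_on ht0 ?_ ?_ ?_
        · exact ((hEcont ((Φ^[n]) g)).sub (hEcont ((Φ^[n]) g'))).norm.intervalIntegrable 0 ↑t
        · exact (continuous_const.mul (continuous_pow n)).intervalIntegrable 0 ↑t
        · intro s hs
          have hsIcc : s ∈ Set.Icc (0:ℝ) T := ⟨hs.1, hs.2.trans htT⟩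
          have hproj : projIcc 0 T hT0 s = ⟨s, hsIcc⟩ := projIcc_of_mem hT0 hsIcc
          rw [hproj]
          have := ih g g' ⟨s, hsIcc⟩
          rw [← dist_eq_norm]
          refine this.trans (le_of_eq ?_)
          ring
      refine le_trans (mul_le_mul_of_nonneg_left hmono hD0) ?_
      refine le_of_eq ?_
      rw [intervalIntegral.integral_const_mul, integral_pow]
      have hfac : ((n+1).factorial : ℝ) = ((n.factorial : ℝ)) * ((n:ℝ)+1) := by
        rw [Nat.factorial_succ]
        push_cast
        ring
      rw [hfac, pow_succ D n]
      have hfn : (0:ℝ) < (n.factorial : ℝ) := by positivity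
      have hn1 : (0:ℝ) < (n:ℝ)+1 := by positivity
      field_simp
      ring
  -- contraction of an iterate
  obtain ⟨n, hn⟩ := ((FloorSemiring.tendsto_pow_div_factorial_atTop (D*T)).eventually
    (gt_mem_nhds one_pos)).exists
  have hKnn : (0:ℝ) ≤ (D*T)^n / (n.factorial : ℝ) := by positivity
  haveI : Nonempty C(↥(Set.Icc (0:ℝ) T), V) := ⟨ContinuousMap.const _ 0⟩
  have hcontr : ContractingWith ⟨(D*T)^n / (n.factorial : ℝ), hKnn⟩ (Φ^[n]) := by
    constructor
    · exact NNReal.coe_lt_coe.mp hn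
    · refine LipschitzWith.of_dist_le_mul ?_
      intro g g'
      have hb : (0:ℝ) ≤ (D*T)^n / (n.factorial : ℝ) * dist g g' :=
        mul_nonneg hKnn dist_nonneg
      show dist ((Φ^[n]) g) ((Φ^[n]) g') ≤ (D*T)^n / (n.factorial : ℝ) * dist g g'
      rw [ContinuousMap.dist_le hb]
      intro t
      refine (hiter n g g' t).trans ?_
      have ht0 : (0:ℝ) ≤ ↑t := t.2.1
      have htT : (↑t:ℝ) ≤ T := t.2.2
      have hp : D^n * (↑t)^n ≤ (D*T)^n := by
        rw [← mul_pow]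
        refine pow_le_pow_left₀ (by positivity) ?_ n
        nlinarith
      have hfn : (0:ℝ) < (n.factorial : ℝ) := by positivity
      have hd0 : (0:ℝ) ≤ dist g g' := dist_nonneg
      rw [div_mul_eq_mul_div, div_mul_eq_mul_div, div_le_div_iff_of_pos_right hfn]
      nlinarith [hp]
  set x := hcontr.fixedPoint with hxd
  have hfp : Function.IsFixedPt (Φ^[n]) x := hcontr.fixedPoint_isFixedPt
  have hΦx : Φ x = x := by
    have h1 : Function.IsFixedPt (Φ^[n]) (Φ x) := by
      unfold Function.IsFixedPt
      rw [← Function.iterate_succ_apply, Function.iterate_succ_apply', hfp]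
    have h2 := hcontr.fixedPoint_unique h1
    have h3 := hcontr.fixedPoint_unique hfp
    rw [h2, ← h3]
  -- the solution
  refine ⟨fun t => x (projIcc 0 T hT0 t), ⟨?_, ?_⟩, ?_⟩
  · exact ((map_continuous x).comp continuous_projIcc).continuousOn
  · intro t ht w
    have hproj : projIcc 0 T hT0 t = ⟨t, ht⟩ := projIcc_of_mem hT0 ht
    have hxt : x (projIcc 0 T hT0 t) = S (f t - B (U x t)) (γ (U x t)) := by
      conv_lhs => rw [← hΦx]
      rw [hproj]
      exact hΦapp x ⟨t, ht⟩
    have hint : (∫ s in (0:ℝ)..t, x (projIcc 0 T hT0 s)) + u₀ = U x t := by rw [hUd]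
    show f t w ≤ A (x (projIcc 0 T hT0 t)) w +
      B ((∫ s in (0:ℝ)..t, x (projIcc 0 T hT0 s)) + u₀) w +
      clarkeDeriv (J (γ ((∫ s in (0:ℝ)..t, x (projIcc 0 T hT0 s)) + u₀)))
        (γ (x (projIcc 0 T hT0 t))) (γ w)
    rw [hint, hxt]
    have := hS (f t - B (U x t)) (γ (U x t)) w
    rw [ContinuousLinearMap.sub_apply] at this
    linarith
  · rintro v' ⟨hv'c, hv'sol⟩ t ht
    set g' : C(↥(Set.Icc (0:ℝ) T), V) := ⟨(Set.Icc (0:ℝ) T).restrict v', hv'c.restrict⟩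
      with hg'd
    have hg'app : ∀ s : ↥(Set.Icc (0:ℝ) T), g' s = v' ↑s := fun s => rfl
    have hUg' : ∀ s ∈ Set.Icc (0:ℝ) T,
        U g' s = (∫ σ in (0:ℝ)..s, v' σ) + u₀ := by
      intro s hsI
      rw [hUd]
      have hcg : (∫ σ in (0:ℝ)..s, g' (projIcc 0 T hT0 σ)) = ∫ σ in (0:ℝ)..s, v' σ := by
        refine intervalIntegral.integral_congr ?_
        intro σ hσ
        rw [uIcc_of_le hsI.1] at hσ
        have hσI : σ ∈ Set.Icc (0:ℝ) T := ⟨hσ.1, hσ.2.trans hsI.2⟩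
        show g' (projIcc 0 T hT0 σ) = v' σ
        rw [projIcc_of_mem hT0 hσI]
        exact hg'app ⟨σ, hσI⟩
      show (∫ σ in (0:ℝ)..s, g' (projIcc 0 T hT0 σ)) + u₀ = (∫ σ in (0:ℝ)..s, v' σ) + u₀
      rw [hcg]
    have hΦg' : Φ g' = g' := by
      ext s
      rw [hΦapp]
      have hsI : (↑s : ℝ) ∈ Set.Icc (0:ℝ) T := s.2
      have hU := hUg' ↑s hsI
      have hv's : ∀ z, (f ↑s - B (U g' ↑s)) z ≤ A (v' ↑s) z +
          clarkeDeriv (J (γ (U g' ↑s))) (γ (v' ↑s)) (γ z) := by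
        intro z
        have := hv'sol ↑s hsI z
        rw [hU, ContinuousLinearMap.sub_apply]
        linarith
      have hSs := hS (f ↑s - B (U g' ↑s)) (γ (U g' ↑s))
      have := hSuniq (f ↑s - B (U g' ↑s)) (γ (U g' ↑s)) _ _ hSs hv's
      rw [this]
      exact (hg'app s).symm
    have hfpg' : Function.IsFixedPt (Φ^[n]) g' := (Function.IsFixedPt.iterate hΦg' n)
    have hg'x : g' = x := hcontr.fixedPoint_unique hfpg'
    have hproj : projIcc 0 T hT0 t = ⟨t, ht⟩ := projIcc_of_mem hT0 ht
    show v' t = x (projIcc 0 T hT0 t)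
    rw [hproj, ← hg'x]
    exact (hg'app ⟨t, ht⟩).symm

end Evolution

/-- Under H(A), H(B), H(J), H(f), H(u₀) and (H_s), Problem `P_hvi`
has a unique continuous solution `v : [0,T] → V`. -/
theorem existence_uniqueness_Phvi
    {V X : Type*}
    [NormedAddCommGroup V] [NormedSpace ℝ V] [CompleteSpace V]
    [NormedAddCommGroup X] [NormedSpace ℝ X] [CompleteSpace X]
    -- V reflexive
    (hrefl : Function.Surjective (NormedSpace.inclusionInDoubleDual ℝ V))
    (γ : V →L[ℝ] X)
    -- H(A)
    (A : V →L[ℝ] V →L[ℝ] ℝ)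
    (hAsym : ∀ u v : V, A u v = A v u)
    (mA : ℝ) (hmA : 0 < mA)
    (hAco : ∀ u : V, mA * ‖u‖ ^ 2 ≤ A u u)
    -- H(B)
    (B : V → V →L[ℝ] ℝ)
    (LB : ℝ) (hLB : 0 < LB)
    (hB : ∀ v w : V, ‖B v - B w‖ ≤ LB * ‖v - w‖)
    -- H(J)
    (J : X → X → ℝ)
    (hJa : ∀ w : X, LocallyLipschitz (J w))
    (c₀ c₁ c₂ : ℝ) (hc₀ : 0 ≤ c₀) (hc₁ : 0 ≤ c₁) (hc₂ : 0 ≤ c₂)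
    (hJb : ∀ w v : X, ∀ ξ ∈ clarkeSubdiff (J w) v, ‖ξ‖ ≤ c₀ + c₁ * ‖w‖ + c₂ * ‖v‖)
    (mJ1 mJ2 : ℝ) (hmJ1 : 0 ≤ mJ1) (hmJ2 : 0 ≤ mJ2)
    (hJc : ∀ w₁ w₂ v₁ v₂ : X,
      clarkeDeriv (J w₁) v₁ (v₂ - v₁) + clarkeDeriv (J w₂) v₂ (v₁ - v₂) ≤
        mJ1 * ‖v₁ - v₂‖ ^ 2 + mJ2 * ‖w₁ - w₂‖ * ‖v₁ - v₂‖)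
    -- H(f)
    (T : ℝ) (hT : 0 < T)
    (f : ℝ → V →L[ℝ] ℝ) (hf : ContinuousOn f (Set.Icc 0 T))
    -- H(u₀)
    (u₀ : V)
    -- (H_s)
    (hs : 0 < mA - 2 * mJ1 * ‖γ‖ ^ 2) :
    ∃ v : ℝ → V,
      (ContinuousOn v (Set.Icc 0 T) ∧
        ∀ t ∈ Set.Icc (0 : ℝ) T, ∀ w : V,
          f t w ≤ A (v t) w + B ((∫ s in (0 : ℝ)..t, v s) + u₀) w +
            clarkeDeriv (J (γ ((∫ s in (0 : ℝ)..t, v s) + u₀))) (γ (v t)) (γ w)) ∧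
      ∀ v' : ℝ → V,
        (ContinuousOn v' (Set.Icc 0 T) ∧
          ∀ t ∈ Set.Icc (0 : ℝ) T, ∀ w : V,
            f t w ≤ A (v' t) w + B ((∫ s in (0 : ℝ)..t, v' s) + u₀) w +
              clarkeDeriv (J (γ ((∫ s in (0 : ℝ)..t, v' s) + u₀))) (γ (v' t)) (γ w)) →
        ∀ t ∈ Set.Icc (0 : ℝ) T, v' t = v t := by
  exact main_aux γ A hAsym mA hAco B LB hLB hB J hJa mJ1 mJ2 hmJ1 hmJ2 hJc T hT f hf u₀ hs
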